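/- For a Gaussian kernel f(u) = exp(-‖u‖²/(2τ²)) and a centered Gaussian distribution G = N(0, Σ) on ℝ^p, the mean-shift map K_G(x) = (∫ f(x-y) y dG(y)) / (∫ f(x-y) dG(y)) equals the linear map (I + τ²Σ^{-1})^{-1} x. -/

import Mathlib

set_option maxHeartbeats 1000000

open MeasureTheory Matrix

theorem stmt_8 (p : ℕ) (S : Matrix (Fin p) (Fin p) ℝ)
    (hS : S.PosDef) (hSsymm : S.IsSymm) (τ : ℝ) (hτ : 0 < τ)
    (f : (Fin p → ℝ) → ℝ) (hf : ∀ u, f u = Real.exp (-(u ⬝ᵥ u) / (2 * τ ^ 2)))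
    (gdens : (Fin p → ℝ) → ℝ)
    (hg : ∀ y, gdens y = Real.exp (-(y ⬝ᵥ (S⁻¹ *ᵥ y)) / 2))
    (x : Fin p → ℝ) :
    (∫ y, f (x - y) * gdens y)⁻¹ • (∫ y, (f (x - y) * gdens y) • y) =
      ((1 + τ ^ 2 • S⁻¹)⁻¹ : Matrix (Fin p) (Fin p) ℝ) *ᵥ x := by
  classical
  have hτ2 : (0:ℝ) < τ ^ 2 := by positivity
  set A : Matrix (Fin p) (Fin p) ℝ := (τ ^ 2)⁻¹ • (1 : Matrix (Fin p) (Fin p) ℝ) + S⁻¹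
    with hAdef
  have hSinv : (S⁻¹).PosDef := hS.inv
  have h1 : ((τ ^ 2)⁻¹ • (1 : Matrix (Fin p) (Fin p) ℝ)).PosDef := by
    rw [smul_one_eq_diagonal]
    exact .diagonal fun i => by positivity
  have hA : A.PosDef := h1.add hSinv
  have hAunit : IsUnit A.det := hA.det_pos.ne'.isUnit
  have hAinv : A * A⁻¹ = 1 := Matrix.mul_nonsing_inv A hAunit
  have hAsymm : Aᵀ = A := by
    rw [hAdef, transpose_add, transpose_smul, transpose_one, Matrix.transpose_nonsing_inv,
      hSsymm.eq]
  set m : Fin p → ℝ := A⁻¹ *ᵥ ((τ ^ 2)⁻¹ • x) with hmdef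
  have hAm : A *ᵥ m = (τ ^ 2)⁻¹ • x := by
    rw [hmdef, mulVec_mulVec, hAinv, one_mulVec]
  have hsym : ∀ v w : Fin p → ℝ, v ⬝ᵥ (A *ᵥ w) = (A *ᵥ v) ⬝ᵥ w := by
    intro v w
    rw [Matrix.dotProduct_mulVec, ← Matrix.mulVec_transpose, hAsymm]
  -- quadratic expansions
  have e2 : ∀ y : Fin p → ℝ, y ⬝ᵥ (A *ᵥ y) = (τ ^ 2)⁻¹ * (y ⬝ᵥ y) + y ⬝ᵥ (S⁻¹ *ᵥ y) := by
    intro y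
    rw [hAdef, Matrix.add_mulVec, dotProduct_add, smul_mulVec, one_mulVec,
      dotProduct_smul, smul_eq_mul]
  set h : (Fin p → ℝ) → ℝ := fun z => Real.exp (-(z ⬝ᵥ (A *ᵥ z)) / 2) with hhdef
  set c : ℝ := (τ ^ 2)⁻¹ * (x ⬝ᵥ x) - m ⬝ᵥ (A *ᵥ m) with hcdef
  have key : ∀ y : Fin p → ℝ, f (x - y) * gdens y = Real.exp (-c / 2) * h (y - m) := by
    intro y
    rw [hf, hg, hhdef, ← Real.exp_add, ← Real.exp_add]
    congr 1
    have e1 : (y - m) ⬝ᵥ (A *ᵥ (y - m))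
        = y ⬝ᵥ (A *ᵥ y) - 2 * ((τ ^ 2)⁻¹ * (x ⬝ᵥ y)) + m ⬝ᵥ (A *ᵥ m) := by
      rw [Matrix.mulVec_sub, dotProduct_sub, sub_dotProduct,
        sub_dotProduct]
      have hyAm : y ⬝ᵥ (A *ᵥ m) = (τ ^ 2)⁻¹ * (x ⬝ᵥ y) := by
        rw [hAm, dotProduct_smul, smul_eq_mul, dotProduct_comm]
      have hmAy : m ⬝ᵥ (A *ᵥ y) = (τ ^ 2)⁻¹ * (x ⬝ᵥ y) := by
        rw [hsym, hAm, smul_dotProduct, smul_eq_mul]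
      rw [hyAm, hmAy]
      ring
    have e3 : (x - y) ⬝ᵥ (x - y) = x ⬝ᵥ x - 2 * (x ⬝ᵥ y) + y ⬝ᵥ y := by
      rw [dotProduct_sub, sub_dotProduct, sub_dotProduct,
        dotProduct_comm y x]
      ring
    rw [e1, e3, e2 y, hcdef]
    have hτ2' : (τ:ℝ) ^ 2 ≠ 0 := hτ2.ne'
    generalize x ⬝ᵥ x = a
    generalize x ⬝ᵥ y = b
    generalize y ⬝ᵥ y = d
    generalize y ⬝ᵥ (S⁻¹ *ᵥ y) = e
    generalize m ⬝ᵥ (A *ᵥ m) = q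
    field_simp
    ring
  -- integrability
  have hcont : Continuous fun z : Fin p → ℝ => z ⬝ᵥ (A *ᵥ z) :=
    continuous_id.dotProduct (continuous_const.matrix_mulVec continuous_id)
  have hconth : Continuous h := by
    rw [hhdef]
    exact (hcont.neg.div_const 2).rexp
  have hdot : ∀ z : Fin p → ℝ, z ⬝ᵥ z = ∑ i, (z i) ^ 2 := by
    intro z; simp [dotProduct, sq]
  have hbound : ∀ z : Fin p → ℝ, h z ≤ ∏ i, Real.exp (-(2 * τ ^ 2)⁻¹ * (z i) ^ 2) := by
    intro z
    rw [← Real.exp_sum, hhdef]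
    apply Real.exp_le_exp.2
    have h0 : 0 ≤ z ⬝ᵥ (S⁻¹ *ᵥ z) := by
      simpa using hSinv.posSemidef.dotProduct_mulVec_nonneg z
    have : ∑ i, -(2 * τ ^ 2)⁻¹ * (z i) ^ 2 = -(2 * τ ^ 2)⁻¹ * (z ⬝ᵥ z) := by
      rw [hdot, Finset.mul_sum]
    rw [this, e2]
    have hzz : 0 ≤ z ⬝ᵥ z := by
      rw [hdot]; positivity
    rw [neg_div]
    have : ((τ ^ 2)⁻¹ * (z ⬝ᵥ z) + z ⬝ᵥ (S⁻¹ *ᵥ z)) / 2 ≥ (2 * τ ^ 2)⁻¹ * (z ⬝ᵥ z) := by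
      rw [ge_iff_le, mul_inv]
      nlinarith [mul_le_mul_of_nonneg_right (inv_pos.2 hτ2).le hzz]
    linarith
  have hprodInt : Integrable (fun z : Fin p → ℝ => ∏ i, Real.exp (-(2 * τ ^ 2)⁻¹ * (z i) ^ 2)) :=
    Integrable.fintype_prod fun i => integrable_exp_neg_mul_sq (by positivity)
  have hInt : Integrable h := by
    refine hprodInt.mono' hconth.aestronglyMeasurable ?_
    filter_upwards with z
    rw [Real.norm_eq_abs, abs_of_pos (Real.exp_pos _)]
    exact hbound z
  have habsInt : ∀ i : Fin p, Integrable
      (fun z : Fin p → ℝ => ∏ j, ((if j = i then |z j| else 1) *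
        Real.exp (-(2 * τ ^ 2)⁻¹ * (z j) ^ 2))) := by
    intro i
    refine Integrable.fintype_prod
      (f := fun j t => (if j = i then |t| else 1) * Real.exp (-(2 * τ ^ 2)⁻¹ * t ^ 2))
      fun j => ?_
    by_cases hj : j = i
    · subst hj
      simp only [if_pos rfl]
      have h1 : Integrable (fun t : ℝ => t ^ (1:ℝ) * Real.exp (-(2 * τ ^ 2)⁻¹ * t ^ 2)) :=
        integrable_rpow_mul_exp_neg_mul_sq (by positivity) (by norm_num)
      refine h1.abs.congr ?_
      filter_upwards with a
      rw [Real.rpow_one, abs_mul, abs_of_pos (Real.exp_pos _)]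
      simp
    · simp only [if_neg hj, one_mul]
      exact integrable_exp_neg_mul_sq (by positivity)
  have hInty : Integrable (fun z : Fin p → ℝ => h z • z) := by
    have hBint : Integrable (fun z : Fin p → ℝ => ∑ i, ∏ j, ((if j = i then |z j| else 1) *
        Real.exp (-(2 * τ ^ 2)⁻¹ * (z j) ^ 2))) :=
      integrable_finset_sum _ fun i _ => habsInt i
    refine hBint.mono' (hconth.smul continuous_id).aestronglyMeasurable ?_
    filter_upwards with z
    have hprod : ∀ i : Fin p, (∏ j, ((if j = i then |z j| else 1) *
        Real.exp (-(2 * τ ^ 2)⁻¹ * (z j) ^ 2)))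
        = |z i| * ∏ j, Real.exp (-(2 * τ ^ 2)⁻¹ * (z j) ^ 2) := by
      intro i
      rw [Finset.prod_mul_distrib]
      congr 1
      simp
    have hnorm : ‖h z • z‖ = h z * ‖z‖ := by
      rw [norm_smul, Real.norm_eq_abs, abs_of_pos (Real.exp_pos _)]
    rw [hnorm]
    have hzn : ‖z‖ ≤ ∑ i, |z i| := by
      by_cases hp0 : p = 0
      · subst hp0
        simp [Subsingleton.elim z 0]
      · refine (pi_norm_le_iff_of_nonneg (by positivity)).2 fun i => ?_
        rw [Real.norm_eq_abs]
        exact Finset.single_le_sum (fun j _ => abs_nonneg (z j)) (Finset.mem_univ i)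
    calc h z * ‖z‖ ≤ (∏ j, Real.exp (-(2 * τ ^ 2)⁻¹ * (z j) ^ 2)) * ∑ i, |z i| := by
          apply mul_le_mul (hbound z) hzn (norm_nonneg z)
          positivity
      _ = ∑ i, |z i| * ∏ j, Real.exp (-(2 * τ ^ 2)⁻¹ * (z j) ^ 2) := by
          rw [Finset.mul_sum]
          exact Finset.sum_congr rfl fun i _ => mul_comm _ _
      _ = ∑ i, ∏ j, ((if j = i then |z j| else 1) *
            Real.exp (-(2 * τ ^ 2)⁻¹ * (z j) ^ 2)) := by
          simp_rw [hprod]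
  -- oddness
  have hhneg : ∀ z : Fin p → ℝ, h (-z) = h z := by
    intro z
    rw [hhdef]
    simp only [Matrix.mulVec_neg, dotProduct_neg, neg_dotProduct, neg_neg]
  have hodd : (∫ z, h z • z) = 0 := by
    have h1 : (∫ z, h (-z) • (-z)) = ∫ z, h z • z :=
      integral_neg_eq_self (fun z : Fin p → ℝ => h z • z) volume
    have h2 : (fun z : Fin p → ℝ => h (-z) • (-z)) = fun z => -(h z • z) := by
      funext z
      rw [hhneg, smul_neg]
    rw [h2, integral_neg] at h1
    have h3 : (2:ℝ) • (∫ z, h z • z) = 0 := by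
      rw [two_smul]
      nth_rewrite 1 [← h1]
      exact neg_add_cancel _
    rcases smul_eq_zero.mp h3 with h4 | h4
    · norm_num at h4
    · exact h4
  have hI0pos : (0:ℝ) < ∫ z, h z := by
    rw [integral_pos_iff_support_of_nonneg (fun z => (Real.exp_pos _).le) hInt]
    have hs : Function.support h = Set.univ := Set.eq_univ_of_forall fun z => (Real.exp_pos _).ne'
    rw [hs]
    exact IsOpen.measure_pos volume isOpen_univ Set.univ_nonempty
  have hshift0 : (∫ y, h (y - m)) = ∫ z, h z := integral_sub_right_eq_self h m
  have hshift : (∫ y, h (y - m) • y) = (∫ z, h z) • m := by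
    have e : (∫ y, h (y - m) • y) = ∫ y, h y • (y + m) := by
      rw [← integral_add_right_eq_self (fun y => h (y - m) • y) m]
      simp only [add_sub_cancel_right]
    rw [e]
    have e' : (fun y : Fin p → ℝ => h y • (y + m)) = fun y => h y • y + h y • m := by
      funext y; rw [smul_add]
    rw [e', integral_add hInty (hInt.smul_const m), hodd, zero_add, integral_smul_const]
  have hI1 : (∫ y, f (x - y) * gdens y) = Real.exp (-c / 2) * ∫ z, h z := by
    simp_rw [key]
    rw [MeasureTheory.integral_const_mul, hshift0]
  have hI2 : (∫ y, (f (x - y) * gdens y) • y)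
      = Real.exp (-c / 2) • ((∫ z, h z) • m) := by
    simp_rw [key, mul_smul]
    rw [integral_smul, hshift]
  rw [hI1, hI2, smul_smul, smul_smul]
  have hcoef : (Real.exp (-c / 2) * ∫ z, h z)⁻¹ * Real.exp (-c / 2) * (∫ z, h z) = 1 := by
    have h5 : Real.exp (-c / 2) ≠ 0 := (Real.exp_pos _).ne'
    have h6 : (∫ z, h z) ≠ 0 := hI0pos.ne'
    field_simp
  rw [hcoef, one_smul]
  have hB : (1 : Matrix (Fin p) (Fin p) ℝ) + τ ^ 2 • S⁻¹ = τ ^ 2 • A := by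
    rw [hAdef, smul_add, smul_smul, mul_inv_cancel₀ hτ2.ne', one_smul]
  have hBinv : ((1 : Matrix (Fin p) (Fin p) ℝ) + τ ^ 2 • S⁻¹)⁻¹ = (τ ^ 2)⁻¹ • A⁻¹ := by
    rw [hB]
    apply Matrix.inv_eq_right_inv
    rw [Matrix.smul_mul, Matrix.mul_smul, smul_smul, mul_inv_cancel₀ hτ2.ne', one_smul, hAinv]
  rw [hBinv, smul_mulVec, hmdef, mulVec_smul]
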